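/- Descent property of the proximal majorization-minimization step: let h : R^n → R be convex satisfying |h(x)−h(y)| ≤ h(x−y) for all x,y, let q₁ : R^p → R be convex, q₂ : R^p → R convex differentiable, λ ≥ 0, g(β) = h(Xβ − b) + λq₁(β) − q₂(β). Given β^k, τ > 0, ι > 0 and residual r satisfying 2h(r) + ι‖r‖² ≤ (ι/2)‖X(β^{k+1} − β^k)‖², if β^{k+1} minimizes f_k(β) := h(Xβ − b + r) + λq₁(β) − q₂(β^k) − ⟨∇q₂(β^k), β − β^k⟩ + (τ/2)‖β − β^k‖² + (ι/2)‖X(β − β^k) + r‖², then g(β^k) ≥ g(β^{k+1}) + (τ/2)‖β^{k+1} − β^k‖². -/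

import Mathlib

open scoped InnerProductSpace RealInnerProductSpace

/-- descent property of the proximal majorization-minimization step:
`g(β^k) ≥ g(β^{k+1}) + (τ/2)‖β^{k+1} - β^k‖²`. -/
theorem ppmm_descent {n p : ℕ}
    (X : EuclideanSpace ℝ (Fin p) →L[ℝ] EuclideanSpace ℝ (Fin n))
    (b : EuclideanSpace ℝ (Fin n))
    (h : EuclideanSpace ℝ (Fin n) → ℝ)
    (hh_conv : ConvexOn ℝ Set.univ h)
    (hh : ∀ x y, |h x - h y| ≤ h (x - y))
    (q₁ q₂ : EuclideanSpace ℝ (Fin p) → ℝ)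
    (hq₁ : ConvexOn ℝ Set.univ q₁) (hq₂ : ConvexOn ℝ Set.univ q₂)
    (lam : ℝ) (hlam : 0 ≤ lam)
    (g : EuclideanSpace ℝ (Fin p) → ℝ)
    (hg : ∀ β, g β = h (X β - b) + lam * q₁ β - q₂ β)
    (βk βk1 : EuclideanSpace ℝ (Fin p))
    (gq : EuclideanSpace ℝ (Fin p)) (hgq : HasGradientAt q₂ gq βk)
    (τ ι : ℝ) (hτ : 0 < τ) (hι : 0 < ι)
    (r : EuclideanSpace ℝ (Fin n))
    (hr : 2 * h r + ι * ‖r‖ ^ 2 ≤ (ι / 2) * ‖X (βk1 - βk)‖ ^ 2)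
    (fk : EuclideanSpace ℝ (Fin p) → ℝ)
    (hfk : ∀ β, fk β = h (X β - b + r) + lam * q₁ β - q₂ βk - ⟪gq, β - βk⟫_ℝ +
        (τ / 2) * ‖β - βk‖ ^ 2 + (ι / 2) * ‖X (β - βk) + r‖ ^ 2)
    (hmin : ∀ β, fk βk1 ≤ fk β) :
    g βk1 + (τ / 2) * ‖βk1 - βk‖ ^ 2 ≤ g βk := by
  -- gradient inequality for q₂
  have F4 : q₂ βk + ⟪gq, βk1 - βk⟫_ℝ ≤ q₂ βk1 := by
    set Δ := βk1 - βk with hΔ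
    have hβ : βk + Δ = βk1 := by rw [hΔ]; abel
    have hφconv : ConvexOn ℝ Set.univ (fun t : ℝ => q₂ (βk + t • Δ)) := by
      have h2 := hq₂.comp_affineMap (AffineMap.lineMap βk βk1)
      simp only [AffineMap.coe_lineMap, Function.comp] at h2
      have he : (fun t : ℝ => q₂ (βk + t • Δ)) = fun t : ℝ => q₂ (t • (βk1 -ᵥ βk) +ᵥ βk) := by
        funext t; simp [hΔ, add_comm]
      rw [he]; exact h2
    have h1 : HasDerivAt (fun t : ℝ => βk + t • Δ) Δ 0 := by
      simpa using ((hasDerivAt_id (0:ℝ)).smul_const Δ).const_add βk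
    have hφd : HasDerivAt (fun t : ℝ => q₂ (βk + t • Δ)) ⟪gq, Δ⟫_ℝ 0 := by
      have hf : HasFDerivAt q₂ ((InnerProductSpace.toDual ℝ _) gq) (βk + (0:ℝ) • Δ) := by
        simpa using hgq.hasFDerivAt
      exact hf.comp_hasDerivAt 0 h1
    have hs := hφconv.le_slope_of_hasDerivAt (Set.mem_univ (0:ℝ)) (Set.mem_univ 1) one_pos hφd
    rw [slope_def_field] at hs
    simp only [one_smul, zero_smul, add_zero, hβ, sub_zero, div_one] at hs
    linarith
  -- h sandwich inequalities
  have F2 : h (X βk1 - b) ≤ h (X βk1 - b + r) + h r := by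
    have := hh (X βk1 - b + r) (X βk1 - b)
    rw [add_sub_cancel_left] at this
    have := abs_le.mp this
    linarith [this.1]
  have F3 : h (X βk - b + r) ≤ h (X βk - b) + h r := by
    have := hh (X βk - b + r) (X βk - b)
    rw [add_sub_cancel_left] at this
    have := abs_le.mp this
    linarith [(abs_le.mp (hh (X βk - b + r) (X βk - b))).2]
  -- midpoint
  set m : EuclideanSpace ℝ (Fin p) := (1/2 : ℝ) • βk + (1/2 : ℝ) • βk1 with hm
  have hXm : X m = (1/2 : ℝ) • X βk + (1/2 : ℝ) • X βk1 := by
    rw [hm, map_add, map_smul, map_smul]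
  have hm1 : m - βk = (1/2 : ℝ) • (βk1 - βk) := by rw [hm]; module
  have hv : X m - b + r = (1/2 : ℝ) • (X βk - b + r) + (1/2 : ℝ) • (X βk1 - b + r) := by
    rw [hXm]; module
  have hXmk : X (m - βk) = (1/2 : ℝ) • (X (βk1 - βk)) := by
    rw [map_sub, map_sub, hXm]; module
  -- norm computations
  have n1 : ‖m - βk‖ ^ 2 = (1/4) * ‖βk1 - βk‖ ^ 2 := by
    rw [hm1, norm_smul, Real.norm_eq_abs, abs_of_nonneg (by norm_num : (0:ℝ) ≤ 1/2)]
    ring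
  have n2 : ‖X (m - βk) + r‖ ^ 2
      = (1/4) * ‖X (βk1 - βk)‖ ^ 2 + ⟪X (βk1 - βk), r⟫_ℝ + ‖r‖ ^ 2 := by
    rw [hXmk, norm_add_sq_real, real_inner_smul_left, norm_smul, Real.norm_eq_abs,
      abs_of_nonneg (by norm_num : (0:ℝ) ≤ 1/2)]
    ring
  have n3 : ‖X (βk1 - βk) + r‖ ^ 2
      = ‖X (βk1 - βk)‖ ^ 2 + 2 * ⟪X (βk1 - βk), r⟫_ℝ + ‖r‖ ^ 2 := norm_add_sq_real _ _
  have n8 : 0 ≤ ι * ((1/4) * ‖X (βk1 - βk)‖ ^ 2 + ⟪X (βk1 - βk), r⟫_ℝ + ‖r‖ ^ 2) := by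
    have : (0:ℝ) ≤ ‖X (m - βk) + r‖ ^ 2 := sq_nonneg _
    rw [n2] at this
    exact mul_nonneg hι.le this
  have nD : 0 ≤ τ * ‖βk1 - βk‖ ^ 2 := mul_nonneg hτ.le (sq_nonneg _)
  -- midpoint convexity bounds
  have hhm : h (X m - b + r) ≤ (1/2) * h (X βk - b + r) + (1/2) * h (X βk1 - b + r) := by
    rw [hv]
    simpa using hh_conv.2 (Set.mem_univ (X βk - b + r)) (Set.mem_univ (X βk1 - b + r))
      (by norm_num : (0:ℝ) ≤ 1/2) (by norm_num : (0:ℝ) ≤ 1/2) (by norm_num)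
  have hq1m : q₁ m ≤ (1/2) * q₁ βk + (1/2) * q₁ βk1 := by
    rw [hm]
    simpa using hq₁.2 (Set.mem_univ βk) (Set.mem_univ βk1)
      (by norm_num : (0:ℝ) ≤ 1/2) (by norm_num : (0:ℝ) ≤ 1/2) (by norm_num)
  have hq1m' : lam * q₁ m ≤ lam * ((1/2) * q₁ βk + (1/2) * q₁ βk1) :=
    mul_le_mul_of_nonneg_left hq1m hlam
  have i1 : ⟪gq, m - βk⟫_ℝ = (1/2) * ⟪gq, βk1 - βk⟫_ℝ := by
    rw [hm1, real_inner_smul_right]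
  -- key inequality from minimality at midpoint
  have key : fk βk1 ≤ fk m := hmin m
  have ek1 : fk βk1 = h (X βk1 - b + r) + lam * q₁ βk1 - q₂ βk - ⟪gq, βk1 - βk⟫_ℝ +
      (τ / 2) * ‖βk1 - βk‖ ^ 2 +
      (ι / 2) * (‖X (βk1 - βk)‖ ^ 2 + 2 * ⟪X (βk1 - βk), r⟫_ℝ + ‖r‖ ^ 2) := by
    rw [hfk βk1, n3]
  have em_le : fk m ≤ (1/2) * h (X βk - b + r) + (1/2) * h (X βk1 - b + r) +
      lam * ((1/2) * q₁ βk + (1/2) * q₁ βk1) - q₂ βk - (1/2) * ⟪gq, βk1 - βk⟫_ℝ +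
      (τ / 2) * ((1/4) * ‖βk1 - βk‖ ^ 2) +
      (ι / 2) * ((1/4) * ‖X (βk1 - βk)‖ ^ 2 + ⟪X (βk1 - βk), r⟫_ℝ + ‖r‖ ^ 2) := by
    rw [hfk m, n1, n2, i1]
    linarith
  rw [hg βk1, hg βk]
  linarith [key, ek1, em_le, F2, F3, F4, hr, n8, nD]
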